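/- Let ε > 0 and let v : Π_ε → ℂ be holomorphic, 1-periodic (v(z+1) = v(z)), continuous on the closure of Π_ε, and bounded by M = sup_{z ∈ closure(Π_ε)} |v(z)|. Then its Fourier coefficients v̂(n) = ∫_0^1 v(x) e^{−2πinx} dx satisfy |v̂(n)| ≤ M e^{−2πε|n|} for every integer n. -/

import Mathlib

open Filter Set Topology

/-- The horizontal strip `Π_ε = {z : |Im z| < ε}` (a lift of the cylinder). -/
def Strip (ε : ℝ) : Set ℂ := {z : ℂ | |z.im| < ε}

lemma isOpen_strip (ε : ℝ) : IsOpen (Strip ε) := by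
  have : Strip ε = (fun z : ℂ => |z.im|) ⁻¹' Iio ε := rfl
  rw [this]
  exact (continuous_abs.comp Complex.continuous_im).isOpen_preimage _ isOpen_Iio

lemma mem_closure_strip {ε : ℝ} (hε : 0 < ε) {z : ℂ} (h : |z.im| ≤ ε) :
    z ∈ closure (Strip ε) := by
  refine mem_closure_of_tendsto (f := fun t : ℝ => (z.re : ℂ) + t * z.im * Complex.I)
    (b := 𝓝[<] (1:ℝ)) ?_ ?_
  · have h1 : Filter.Tendsto (fun t : ℝ => (z.re : ℂ) + t * z.im * Complex.I) (𝓝 (1:ℝ))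
        (𝓝 ((z.re : ℂ) + ((1:ℝ):ℂ) * z.im * Complex.I)) := by
      apply Filter.Tendsto.add tendsto_const_nhds
      exact (Complex.continuous_ofReal.continuousAt.mul_const _).mul_const _
    have h2 : (z.re : ℂ) + ((1:ℝ):ℂ) * z.im * Complex.I = z := by
      push_cast; rw [one_mul, Complex.re_add_im]
    rw [h2] at h1
    exact h1.mono_left nhdsWithin_le_nhds
  · filter_upwards [Ioo_mem_nhdsLT_of_mem (by simp : (1:ℝ) ∈ Set.Ioc 0 1)] with t ht
    have ht0 : 0 < t := ht.1
    have ht1 : t < 1 := ht.2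
    show |((z.re : ℂ) + t * z.im * Complex.I).im| < ε
    have he : ((z.re : ℂ) + (t:ℝ) * z.im * Complex.I).im = t * z.im := by simp
    rw [he, abs_mul, abs_of_pos ht0]
    calc t * |z.im| ≤ t * ε := by nlinarith [abs_nonneg z.im]
    _ < ε := by nlinarith

/-- Exponential decay of Fourier coefficients: a `1`-periodic holomorphic function on
`Π_ε`, continuous on the closure and bounded by `M` there, has Fourier coefficients
`v̂(n) = ∫_0^1 v(x) e^{−2πinx} dx` with `|v̂(n)| ≤ M e^{−2πε|n|}`. -/
theorem fourier_coeff_exponential_decay (ε : ℝ) (hε : 0 < ε) (v : ℂ → ℂ) (M : ℝ)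
    (hval : DifferentiableOn ℂ v (Strip ε))
    (hper : ∀ z ∈ Strip ε, v (z + 1) = v z)
    (hcont : ContinuousOn v (closure (Strip ε)))
    (hM : ∀ z ∈ closure (Strip ε), ‖v z‖ ≤ M) :
    ∀ n : ℤ,
      ‖∫ x in (0:ℝ)..1, v (x : ℂ) *
          Complex.exp (-(2 * (Real.pi : ℂ) * Complex.I * (n : ℂ) * (x : ℂ)))‖ ≤
        M * Real.exp (-(2 * Real.pi * ε) * |(n : ℝ)|) := by
  intro n
  set y : ℝ := -(ε * (n.sign : ℝ)) with hy_def
  have hy_abs : |y| ≤ ε := by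
    rcases lt_trichotomy n 0 with h | h | h
    · simp [hy_def, Int.sign_eq_neg_one_iff_neg.mpr h, abs_of_pos hε]
    · simp [hy_def, h, le_of_lt hε]
    · simp [hy_def, Int.sign_eq_one_iff_pos.mpr h, abs_of_pos hε]
  have hny : (n : ℝ) * y = -(ε * |(n : ℝ)|) := by
    rcases lt_trichotomy n 0 with h | h | h
    · have hn : (n:ℝ) < 0 := by exact_mod_cast h
      rw [hy_def, abs_of_neg hn]
      simp [Int.sign_eq_neg_one_iff_neg.mpr h]
      ring
    · simp [hy_def, h]
    · have hn : (0:ℝ) < (n:ℝ) := by exact_mod_cast h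
      rw [hy_def, abs_of_pos hn]
      simp [Int.sign_eq_one_iff_pos.mpr h]
      ring
  have h1y : -|y| ≤ min (0:ℝ) y := le_min (neg_nonpos.mpr (abs_nonneg y)) (neg_abs_le y)
  have h2y : max (0:ℝ) y ≤ |y| := max_le (abs_nonneg y) (le_abs_self y)
  set f : ℂ → ℂ := fun z => v z * Complex.exp (-(2 * (Real.pi : ℂ) * Complex.I * (n : ℂ) * z))
    with hf_def
  -- the exponential is 1-periodic
  have hexp1 : ∀ z : ℂ, Complex.exp (-(2 * (Real.pi:ℂ) * Complex.I * n * (z + 1)))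
      = Complex.exp (-(2 * (Real.pi:ℂ) * Complex.I * n * z)) := by
    intro z
    have he : -(2 * (Real.pi:ℂ) * Complex.I * n * (z + 1))
        = -(2 * (Real.pi:ℂ) * Complex.I * n * z) + ((-n : ℤ) : ℂ) * (2 * Real.pi * Complex.I) := by
      push_cast; ring
    rw [he, Complex.exp_add, Complex.exp_int_mul_two_pi_mul_I, mul_one]
  -- the rectangle boundary integral vanishes
  have hrect := Complex.integral_boundary_rect_eq_zero_of_differentiable_on_off_countable f 0
      (1 + (y:ℂ) * Complex.I) ∅ countable_empty ?_ ?_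
  rotate_left
  · -- continuity on the rectangle
    apply ContinuousOn.mono (s := closure (Strip ε))
    · exact hcont.mul (Continuous.continuousOn (by fun_prop))
    · intro z hz
      rw [Complex.mem_reProdIm] at hz
      apply mem_closure_strip hε
      have hzim : z.im ∈ Set.uIcc (0:ℝ) y := by simpa using hz.2
      rw [Set.uIcc, Set.mem_Icc] at hzim
      exact (abs_le.mpr ⟨h1y.trans hzim.1, hzim.2.trans h2y⟩).trans hy_abs
  · -- differentiability on the interior
    intro z hz
    rw [Set.diff_empty, Complex.mem_reProdIm] at hz
    have hzs : z ∈ Strip ε := by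
      have hzim : z.im ∈ Set.Ioo (min (0:ℝ) y) (max (0:ℝ) y) := by
        have := hz.2; simpa using this
      have : |z.im| < |y| := abs_lt.mpr ⟨lt_of_le_of_lt h1y hzim.1, lt_of_lt_of_le hzim.2 h2y⟩
      exact lt_of_lt_of_le this hy_abs
    exact (hval.differentiableAt ((isOpen_strip ε).mem_nhds hzs)).mul
      ((Complex.differentiable_exp.comp ((differentiable_id.const_mul _).neg)).differentiableAt)
  -- simplify the rectangle identity
  simp only [Complex.zero_re, Complex.zero_im, Complex.add_re, Complex.add_im, Complex.one_re,
    Complex.one_im, Complex.mul_re, Complex.mul_im, Complex.ofReal_re, Complex.ofReal_im,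
    Complex.I_re, Complex.I_im, mul_zero, mul_one, zero_mul, sub_zero, add_zero, zero_add,
    zero_sub, Complex.ofReal_zero] at hrect
  -- the two vertical integrals coincide by periodicity
  have hvert : (∫ t : ℝ in (0:ℝ)..y, f (((1:ℝ):ℂ) + (t:ℂ) * Complex.I))
      = ∫ t : ℝ in (0:ℝ)..y, f ((t:ℂ) * Complex.I) := by
    apply intervalIntegral.integral_congr_ae
    have hfin : ∀ᵐ t : ℝ, t ∉ ({ε, -ε} : Set ℝ) := by
      have : MeasureTheory.volume ({ε, -ε} : Set ℝ) = 0 :=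
        (Set.Finite.insert ε (Set.finite_singleton (-ε))).measure_zero _
      exact MeasureTheory.measure_eq_zero_iff_ae_notMem.mp this
    filter_upwards [hfin] with t htne htmem
    have htabs : |t| ≤ |y| := by
      rw [Set.uIoc, Set.mem_Ioc] at htmem
      exact abs_le.mpr ⟨h1y.trans htmem.1.le, htmem.2.trans h2y⟩
    have htlt : |t| < ε := by
      rcases lt_or_eq_of_le (htabs.trans hy_abs) with h | h
      · exact h
      · exfalso
        rcases abs_eq (le_of_lt hε) |>.mp h with h' | h'
        · exact htne (Or.inl h')
        · exact htne (Or.inr h')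
    have hts : (t:ℂ) * Complex.I ∈ Strip ε := by
      show |((t:ℂ) * Complex.I).im| < ε
      simpa using htlt
    rw [hf_def]
    simp only
    rw [show ((1:ℝ):ℂ) + (t:ℂ) * Complex.I = (t:ℂ) * Complex.I + 1 by push_cast; ring,
      hper _ hts, hexp1]
  rw [hvert] at hrect
  have hkey : (∫ x : ℝ in (0:ℝ)..1, f (x:ℂ))
      = ∫ x : ℝ in (0:ℝ)..1, f ((x:ℂ) + (y:ℂ) * Complex.I) := by
    simp only [smul_eq_mul] at hrect
    linear_combination hrect
  have hbound : ∀ x ∈ Set.uIoc (0:ℝ) 1,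
      ‖f ((x:ℂ) + (y:ℂ) * Complex.I)‖ ≤ M * Real.exp (-(2 * Real.pi * ε) * |(n:ℝ)|) := by
    intro x _
    have hz : ((x:ℂ) + (y:ℂ) * Complex.I) ∈ closure (Strip ε) :=
      mem_closure_strip hε (by simpa using hy_abs)
    rw [hf_def]
    simp only
    rw [norm_mul]
    have hre : (-(2 * (Real.pi:ℂ) * Complex.I * (n:ℂ) * ((x:ℂ) + (y:ℂ) * Complex.I))).re
        = -(2 * Real.pi * ε) * |(n:ℝ)| := by
      have he : -(2 * (Real.pi:ℂ) * Complex.I * (n:ℂ) * ((x:ℂ) + (y:ℂ) * Complex.I))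
          = ((2 * Real.pi * ((n:ℝ) * y) : ℝ) : ℂ)
            + ((-(2 * Real.pi * (n:ℝ) * x) : ℝ) : ℂ) * Complex.I := by
        push_cast
        linear_combination (-2 * (Real.pi:ℂ) * (n:ℂ) * (y:ℂ)) * Complex.I_sq
      rw [he]
      simp only [Complex.add_re, Complex.ofReal_re, Complex.mul_re, Complex.ofReal_im,
        Complex.I_re, Complex.I_im, mul_zero, zero_mul, mul_one, sub_zero, zero_sub, add_zero]
      rw [hny]
      ring
    rw [Complex.norm_exp, hre]
    exact mul_le_mul_of_nonneg_right (hM _ hz) (Real.exp_pos _).le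
  show ‖∫ x : ℝ in (0:ℝ)..1, f (x:ℂ)‖ ≤ _
  rw [hkey]
  calc ‖∫ x : ℝ in (0:ℝ)..1, f ((x:ℂ) + (y:ℂ) * Complex.I)‖
      ≤ M * Real.exp (-(2 * Real.pi * ε) * |(n:ℝ)|) * |1 - 0| :=
        intervalIntegral.norm_integral_le_of_norm_le_const hbound
    _ = M * Real.exp (-(2 * Real.pi * ε) * |(n:ℝ)|) := by simp
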